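/- For every bounded function F : 𝒱 → ℂ, the Serre shift satisfies W M_F = M_{𝔞F} W and W* M_F W = M_{𝔟F}, where 𝔞F(n,x) := F(n−1, x mod s^{n−1}) for n ≥ 1 and 𝔞F(0,x) := 0, and 𝔟F(n,x) := (1/s)·Σ_{j=0}^{s-1} F(n+1, x + j·s^n). -/

import Mathlib

/- Fix an integer `s ≥ 2`.  `Vtx s = Σ n, Fin (s^n)`, `Hsp s = ℓ²(Vtx s, ℂ)` with
canonical orthonormal basis `Evec s v = lp.single 2 v 1`.  For bounded
`F : Vtx s → ℂ`, `M_F` is the diagonal operator `M_F E_{(n,x)} = F(n,x)·E_{(n,x)}`. -/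

noncomputable section

abbrev Vtx (s : ℕ) := Σ n : ℕ, Fin (s ^ n)

abbrev Hsp (s : ℕ) := lp (fun _ : Vtx s => ℂ) 2

def Evec (s : ℕ) (v : Vtx s) : Hsp s := lp.single 2 v 1

def idxW (s n : ℕ) (x : Fin (s ^ n)) (j : Fin s) : Fin (s ^ (n + 1)) :=
  ⟨(x : ℕ) + (j : ℕ) * s ^ n, by
    have hx := x.2
    have hj := j.2
    have h1 : (j : ℕ) * s ^ n ≤ (s - 1) * s ^ n :=
      Nat.mul_le_mul (by omega) le_rfl
    have h2 : (s - 1) * s ^ n = s * s ^ n - s ^ n := by rw [Nat.sub_one_mul]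
    have h3 : s ^ n ≤ s * s ^ n := Nat.le_mul_of_pos_left _ (by omega)
    have h4 : s ^ (n + 1) = s * s ^ n := by rw [pow_succ]; ring
    omega⟩

/-- `𝔞F(n,x) = F(n−1, x mod s^{n−1})` for `n ≥ 1` and `𝔞F(0,x) = 0`. -/
def aF (s : ℕ) (F : Vtx s → ℂ) : Vtx s → ℂ
  | ⟨0, _⟩ => 0
  | ⟨n + 1, x⟩ =>
      F ⟨n, ⟨(x : ℕ) % s ^ n, by
        have h1 : 0 < s ^ (n + 1) := lt_of_le_of_lt (Nat.zero_le _) x.2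
        have hs0 : 0 < s := by
          rcases Nat.eq_zero_or_pos s with h | h
          · rw [h, zero_pow (Nat.succ_ne_zero n)] at h1; omega
          · exact h
        exact Nat.mod_lt _ (pow_pos hs0 n)⟩⟩

/-- `𝔟F(n,x) = (1/s)·Σ_{j=0}^{s-1} F(n+1, x + j·s^n)`. -/
def bF (s : ℕ) (F : Vtx s → ℂ) (v : Vtx s) : ℂ :=
  (1 / (s : ℂ)) * ∑ j : Fin s, F ⟨v.1 + 1, idxW s v.1 v.2 j⟩

-- auxiliary lemmas
lemma evec_orth (s : ℕ) (u u' : Vtx s) :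
    (inner ℂ (Evec s u) (Evec s u') : ℂ) = if u = u' then 1 else 0 := by
  simp [Evec, lp.inner_single_left, lp.single_apply, Pi.single_apply]

lemma coord_eq_inner (s : ℕ) (x : Hsp s) (w : Vtx s) : x w = (inner ℂ (Evec s w) x : ℂ) := by
  simp [Evec, lp.inner_single_left]

lemma evec_ext (s : ℕ) (A B : Hsp s →L[ℂ] Hsp s)
    (h : ∀ v, A (Evec s v) = B (Evec s v)) : A = B := by
  refine ContinuousLinearMap.ext fun f => ?_
  have hf := lp.hasSum_single (E := fun _ : Vtx s => ℂ) ENNReal.ofNat_ne_top f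
  have key : ∀ v : Vtx s, lp.single (E := fun _ : Vtx s => ℂ) 2 v (f v) = f v • Evec s v := by
    intro v
    have := lp.single_smul (E := fun _ : Vtx s => ℂ) 2 v (f v) (1 : ℂ)
    rw [Evec, ← this, smul_eq_mul, mul_one]
  have hA := hf.mapL A
  have hB := hf.mapL B
  simp only [key, map_smul, h] at hA hB
  exact hA.unique hB

lemma sigma_idx_eq_iff (s : ℕ) (hs : 2 ≤ s) (n m : ℕ) (x : Fin (s ^ n)) (y : Fin (s ^ m))
    (k j : Fin s) :
    (⟨n + 1, idxW s n x k⟩ : Vtx s) = ⟨m + 1, idxW s m y j⟩ ↔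
      ((⟨n, x⟩ : Vtx s) = ⟨m, y⟩ ∧ k = j) := by
  constructor
  · intro h
    obtain ⟨h1, h2⟩ := Sigma.mk.inj_iff.mp h
    have hnm : n = m := by omega
    subst hnm
    have h3 : idxW s n x k = idxW s n y j := eq_of_heq h2
    have h4 : (x : ℕ) + (k : ℕ) * s ^ n = (y : ℕ) + (j : ℕ) * s ^ n :=
      congrArg Fin.val h3
    have hxy : (x : ℕ) = (y : ℕ) := by
      have := congrArg (· % s ^ n) h4
      simpa [Nat.add_mul_mod_self_right, Nat.mod_eq_of_lt x.2, Nat.mod_eq_of_lt y.2] using this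
    have hkj : (k : ℕ) = (j : ℕ) := by
      have hp : 0 < s ^ n := pow_pos (by omega) n
      have : (k : ℕ) * s ^ n = (j : ℕ) * s ^ n := by omega
      exact Nat.eq_of_mul_eq_mul_right hp this
    exact ⟨by simp [Fin.ext_iff, hxy], Fin.ext hkj⟩
  · rintro ⟨h1, rfl⟩
    obtain ⟨h2, h3⟩ := Sigma.mk.inj_iff.mp h1
    subst h2
    have : x = y := eq_of_heq h3
    subst this
    rfl

/-- For every bounded `F : Vtx s → ℂ`, the Serre shift
`W E_{(n,x)} = (1/√s)·Σ_{j=0}^{s-1} E_{(n+1, x + j·s^n)}` satisfies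
`W M_F = M_{𝔞F} W` and `W* M_F W = M_{𝔟F}`. -/
theorem statement17 (s : ℕ) (hs : 2 ≤ s) (W : Hsp s →L[ℂ] Hsp s)
    (hW : ∀ (n : ℕ) (x : Fin (s ^ n)),
      W (Evec s ⟨n, x⟩) = (1 / (Real.sqrt s : ℂ)) • ∑ j : Fin s, Evec s ⟨n + 1, idxW s n x j⟩)
    (F : Vtx s → ℂ) (hF : ∃ C : ℝ, ∀ v : Vtx s, ‖F v‖ ≤ C)
    (MF MaF MbF : Hsp s →L[ℂ] Hsp s)
    (hMF : ∀ v : Vtx s, MF (Evec s v) = F v • Evec s v)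
    (hMaF : ∀ v : Vtx s, MaF (Evec s v) = aF s F v • Evec s v)
    (hMbF : ∀ v : Vtx s, MbF (Evec s v) = bF s F v • Evec s v) :
    W * MF = MaF * W ∧
    ContinuousLinearMap.adjoint W * MF * W = MbF := by
  have hs0 : 0 < s := by omega
  have hsqrt : ((Real.sqrt s : ℝ) : ℂ) * ((Real.sqrt s : ℝ) : ℂ) = (s : ℂ) := by
    rw [← Complex.ofReal_mul, Real.mul_self_sqrt (by positivity)]
    norm_num
  constructor
  · refine evec_ext s _ _ fun v => ?_
    obtain ⟨n, x⟩ := v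
    have haF : ∀ j : Fin s, aF s F ⟨n + 1, idxW s n x j⟩ = F ⟨n, x⟩ := by
      intro j
      show F ⟨n, ⟨((x : ℕ) + (j : ℕ) * s ^ n) % s ^ n, _⟩⟩ = F ⟨n, x⟩
      congr 1
      have : ((x : ℕ) + (j : ℕ) * s ^ n) % s ^ n = (x : ℕ) := by
        rw [Nat.add_mul_mod_self_right, Nat.mod_eq_of_lt x.2]
      simp [Fin.ext_iff, this]
    simp only [ContinuousLinearMap.mul_apply, hMF, map_smul, hW, map_sum, hMaF, haF,
      Finset.smul_sum, smul_comm (F ⟨n, x⟩)]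
  · refine evec_ext s _ _ fun v => ?_
    obtain ⟨n, x⟩ := v
    refine lp.ext (funext fun w => ?_)
    obtain ⟨m, y⟩ := w
    rw [coord_eq_inner s _ ⟨m, y⟩, coord_eq_inner s _ ⟨m, y⟩]
    simp only [ContinuousLinearMap.mul_apply, ContinuousLinearMap.adjoint_inner_right]
    rw [hW m y, hW n x, map_smul, map_sum]
    simp only [hMF, hMbF]
    simp only [inner_smul_left, inner_smul_right, sum_inner, inner_sum, evec_orth,
      map_div₀, map_one, Complex.conj_ofReal]
    rw [mul_ite, mul_one, mul_zero]
    by_cases hvw : (⟨n, x⟩ : Vtx s) = ⟨m, y⟩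
    · obtain ⟨h1, h2⟩ := Sigma.mk.inj_iff.mp hvw
      subst h1
      have : x = y := eq_of_heq h2
      subst this
      rw [if_pos rfl]
      have hin : ∀ k : Fin s, (∑ j : Fin s,
          if (⟨n + 1, idxW s n x j⟩ : Vtx s) = ⟨n + 1, idxW s n x k⟩ then (1 : ℂ) else 0) = 1 := by
        intro k
        rw [Finset.sum_eq_single k]
        · simp
        · intro j _ hj
          exact if_neg fun h => hj ((sigma_idx_eq_iff s hs n n x x j k).mp h).2
        · simp
      have hts : (1 / (Real.sqrt s : ℂ)) * (1 / (Real.sqrt s : ℂ)) = 1 / (s : ℂ) := by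
        rw [div_mul_div_comm, one_mul, hsqrt]
      simp only [hin, mul_one]
      rw [← Finset.sum_mul,
        show bF s F ⟨n, x⟩ = 1 / (s : ℂ) * ∑ k : Fin s, F ⟨n + 1, idxW s n x k⟩ from rfl, ← hts]
      ring
    · have hzero : ∀ k j : Fin s,
          (if (⟨m + 1, idxW s m y j⟩ : Vtx s) = ⟨n + 1, idxW s n x k⟩ then (1 : ℂ) else 0) = 0 :=
        fun k j => if_neg fun h => hvw (((sigma_idx_eq_iff s hs m n y x j k).mp h).1).symm
      rw [if_neg (show ¬(⟨m, y⟩ : Vtx s) = ⟨n, x⟩ from fun h => hvw h.symm)]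
      simp [hzero]
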